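/- The zigzag algebra A(Γ) is a symmetric algebra: there exists a ℂ-linear map tr : A(Γ) → ℂ such that tr(xy) = tr(yx) for all x, y ∈ A(Γ), and the bilinear form (x, y) ↦ tr(xy) is nondegenerate (i.e., if tr(xy) = 0 for all y ∈ A(Γ) then x = 0). -/

import Mathlib

/-!
The zigzag algebra `A(Γ)` of a finite simple graph `Γ`, presented as a quotient of the
free algebra on generators `{e_a : a ∈ V} ∪ {x_{ab} : a,b adjacent}`.
-/

noncomputable section

/-- Generators of the zigzag algebra: one idempotent `e_a` per vertex `a`, and one
generator `x_{ab}` (the arrow `a → b` in the double quiver) per ordered adjacent pair. -/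
def ZigzagGen {V : Type} (G : SimpleGraph V) : Type :=
  V ⊕ {p : V × V // G.Adj p.1 p.2}

/-- The idempotent generator `e_a` inside the free algebra. -/
def zge (k : Type) [CommRing k] {V : Type} (G : SimpleGraph V) (a : V) :
    FreeAlgebra k (ZigzagGen G) :=
  FreeAlgebra.ι k (Sum.inl a)

/-- The arrow generator `x_{ab}` inside the free algebra. -/
def zgx (k : Type) [CommRing k] {V : Type} (G : SimpleGraph V) {a b : V} (h : G.Adj a b) :
    FreeAlgebra k (ZigzagGen G) :=
  FreeAlgebra.ι k (Sum.inr ⟨(a, b), h⟩)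

/-- The defining relations of the zigzag algebra `A(Γ)`:
`e_a e_b = δ_{ab} e_a`, `Σ_a e_a = 1`, `e_b x_{ab} = x_{ab} = x_{ab} e_a`,
`x_{bc} x_{ab} = 0` for `c ≠ a`, and `x_{ba} x_{ab} = x_{ca} x_{ac}`. -/
inductive ZigzagRel (k : Type) [CommRing k] {V : Type} [Fintype V] (G : SimpleGraph V) :
    FreeAlgebra k (ZigzagGen G) → FreeAlgebra k (ZigzagGen G) → Prop
  | idem (a : V) : ZigzagRel k G (zge k G a * zge k G a) (zge k G a)
  | orth (a b : V) (h : a ≠ b) : ZigzagRel k G (zge k G a * zge k G b) 0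
  | sum_one : ZigzagRel k G (∑ a : V, zge k G a) 1
  | target_id {a b : V} (h : G.Adj a b) :
      ZigzagRel k G (zge k G b * zgx k G h) (zgx k G h)
  | source_id {a b : V} (h : G.Adj a b) :
      ZigzagRel k G (zgx k G h * zge k G a) (zgx k G h)
  | comp_zero {a b c : V} (h₁ : G.Adj a b) (h₂ : G.Adj b c) (hca : c ≠ a) :
      ZigzagRel k G (zgx k G h₂ * zgx k G h₁) 0
  | zigzag {a b c : V} (hab : G.Adj a b) (hac : G.Adj a c) :
      ZigzagRel k G (zgx k G hab.symm * zgx k G hab) (zgx k G hac.symm * zgx k G hac)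

/-- The zigzag algebra `A(Γ)`. -/
abbrev ZigzagAlgebra (k : Type) [CommRing k] {V : Type} [Fintype V] (G : SimpleGraph V) : Type :=
  RingQuot (ZigzagRel k G)

/-- The idempotent `e_a` of the zigzag algebra. -/
def ZigzagAlgebra.e (k : Type) [CommRing k] {V : Type} [Fintype V] (G : SimpleGraph V)
    (a : V) : ZigzagAlgebra k G :=
  RingQuot.mkAlgHom k (ZigzagRel k G) (zge k G a)

namespace ZZaux
set_option linter.unusedSectionVars false

variable {V : Type} [Fintype V] [DecidableEq V] (G : SimpleGraph V) [DecidableRel G.Adj]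

/-- The quotient map. -/
def mk : FreeAlgebra ℂ (ZigzagGen G) →ₐ[ℂ] ZigzagAlgebra ℂ G :=
  RingQuot.mkAlgHom ℂ (ZigzagRel ℂ G)

lemma mkrel {x y : FreeAlgebra ℂ (ZigzagGen G)} (h : ZigzagRel ℂ G x y) :
    mk G x = mk G y := RingQuot.mkAlgHom_rel ℂ h

def eA (a : V) : ZigzagAlgebra ℂ G := mk G (zge ℂ G a)

def xA {a b : V} (h : G.Adj a b) : ZigzagAlgebra ℂ G := mk G (zgx ℂ G h)

lemma eA_mul_eA (a b : V) : eA G a * eA G b = if a = b then eA G a else 0 := by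
  split_ifs with h
  · subst h
    rw [eA, ← map_mul]
    exact mkrel G (ZigzagRel.idem a)
  · rw [eA, eA, ← map_mul]
    rw [mkrel G (ZigzagRel.orth a b h), map_zero]

lemma sum_eA : ∑ a : V, eA G a = 1 := by
  have : ∑ a : V, eA G a = mk G (∑ a : V, zge ℂ G a) := (map_sum (mk G) _ _).symm
  rw [this, mkrel G ZigzagRel.sum_one, map_one]

lemma eA_mul_xA {a b : V} (h : G.Adj a b) (c : V) :
    eA G c * xA G h = if c = b then xA G h else 0 := by
  split_ifs with hc
  · subst hc; rw [eA, xA, ← map_mul]; exact mkrel G (ZigzagRel.target_id h)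
  · have hb : eA G b * xA G h = xA G h := by
      rw [eA, xA, ← map_mul]; exact mkrel G (ZigzagRel.target_id h)
    rw [← hb, ← mul_assoc, eA_mul_eA, if_neg hc, zero_mul]

lemma xA_mul_eA {a b : V} (h : G.Adj a b) (c : V) :
    xA G h * eA G c = if c = a then xA G h else 0 := by
  split_ifs with hc
  · subst hc; rw [eA, xA, ← map_mul]; exact mkrel G (ZigzagRel.source_id h)
  · have hb : xA G h * eA G a = xA G h := by
      rw [eA, xA, ← map_mul]; exact mkrel G (ZigzagRel.source_id h)
    rw [← hb, mul_assoc, eA_mul_eA, if_neg (fun he => hc he.symm), mul_zero]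

lemma zigAB {a b c : V} (hab : G.Adj a b) (hac : G.Adj a c) :
    xA G hab.symm * xA G hab = xA G hac.symm * xA G hac := by
  rw [xA, xA, xA, xA, ← map_mul, ← map_mul]
  exact mkrel G (ZigzagRel.zigzag hab hac)

lemma compz {a b c : V} (h₁ : G.Adj a b) (h₂ : G.Adj b c) (hca : c ≠ a) :
    xA G h₂ * xA G h₁ = 0 := by
  rw [xA, xA, ← map_mul, mkrel G (ZigzagRel.comp_zero h₁ h₂ hca), map_zero]

lemma exists_adj (hconn : G.Connected) (hcard : 2 < Fintype.card V) (a : V) :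
    ∃ b, G.Adj a b := by
  have h1 : 1 < Fintype.card V := by omega
  obtain ⟨c, hc⟩ := Fintype.exists_ne_of_one_lt_card h1 a
  obtain ⟨w⟩ := hconn a c
  cases w with
  | nil => exact absurd rfl hc
  | cons h _ => exact ⟨_, h⟩

lemma walk_stay {a c : V} (hac : ∀ d, G.Adj a d → d = c) (hca : ∀ d, G.Adj c d → d = a) :
    ∀ {u v : V}, G.Walk u v → u ∈ ({a, c} : Set V) → v ∈ ({a, c} : Set V) := by
  intro u v w
  induction w with
  | nil => exact fun h => h
  | cons h p ih =>
    intro hu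
    apply ih
    rcases hu with hu | hu
    · subst hu; right; rw [Set.mem_singleton_iff]; exact hac _ h
    · subst hu; left; exact hca _ h

lemma dichotomy (hconn : G.Connected) (hcard : 2 < Fintype.card V) {a b : V} (h : G.Adj a b) :
    (∃ d, G.Adj b d ∧ d ≠ a) ∨ (∃ d, G.Adj a d ∧ d ≠ b) := by
  by_contra hcon
  push_neg at hcon
  obtain ⟨h1, h2⟩ := hcon
  have hab : ∀ d, G.Adj a d → d = b := fun d hd => h2 d hd
  have hba : ∀ d, G.Adj b d → d = a := fun d hd => h1 d hd
  have hex : ∃ e : V, e ≠ a ∧ e ≠ b := by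
    by_contra hno
    push_neg at hno
    have hsub : (Finset.univ : Finset V) ⊆ {a, b} := by
      intro e _
      rcases eq_or_ne e a with rfl | hne
      · simp
      · simp [hno e hne]
    have : Fintype.card V ≤ 2 := by
      calc Fintype.card V = (Finset.univ : Finset V).card := rfl
        _ ≤ ({a, b} : Finset V).card := Finset.card_le_card hsub
        _ ≤ 2 := Finset.card_le_two
    omega
  obtain ⟨e, hea, heb⟩ := hex
  obtain ⟨w⟩ := hconn a e
  have := walk_stay G hab hba w (Or.inl rfl)
  rcases this with he | he
  · exact hea he
  · exact heb he

def nbr (hconn : G.Connected) (hcard : 2 < Fintype.card V) (a : V) : V :=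
  (exists_adj G hconn hcard a).choose

lemma nbr_adj (hconn : G.Connected) (hcard : 2 < Fintype.card V) (a : V) :
    G.Adj a (nbr G hconn hcard a) :=
  (exists_adj G hconn hcard a).choose_spec

/-- The loop at `a`. -/
def lA (hconn : G.Connected) (hcard : 2 < Fintype.card V) (a : V) : ZigzagAlgebra ℂ G :=
  xA G (nbr_adj G hconn hcard a).symm * xA G (nbr_adj G hconn hcard a)

lemma L_eq (hconn : G.Connected) (hcard : 2 < Fintype.card V) {a e : V} (g : G.Adj a e) :
    xA G g.symm * xA G g = lA G hconn hcard a :=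
  zigAB G g (nbr_adj G hconn hcard a)

lemma three (hconn : G.Connected) (hcard : 2 < Fintype.card V) {a b : V} (h : G.Adj a b) : xA G h * xA G h.symm * xA G h = 0 := by
  rcases dichotomy G hconn hcard h with ⟨d, hbd, hda⟩ | ⟨d, had, hdb⟩
  · have e1 : xA G h * xA G h.symm = xA G hbd.symm * xA G hbd := zigAB G h.symm hbd
    rw [e1, mul_assoc, compz G h hbd hda, mul_zero]
  · have e1 : xA G h.symm * xA G h = xA G had.symm * xA G had := zigAB G h had
    rw [mul_assoc, e1, ← mul_assoc, compz G had.symm h (Ne.symm hdb), zero_mul]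

lemma eA_mul_lA (hconn : G.Connected) (hcard : 2 < Fintype.card V) (c a : V) :
    eA G c * lA G hconn hcard a = if c = a then lA G hconn hcard a else 0 := by
  rw [lA, ← mul_assoc, eA_mul_xA]
  split_ifs with hc
  · rfl
  · rw [zero_mul]

lemma lA_mul_eA (hconn : G.Connected) (hcard : 2 < Fintype.card V) (a c : V) :
    lA G hconn hcard a * eA G c = if c = a then lA G hconn hcard a else 0 := by
  rw [lA, mul_assoc, xA_mul_eA]
  split_ifs with hc
  · rfl
  · rw [mul_zero]

lemma xA_mul_lA (hconn : G.Connected) (hcard : 2 < Fintype.card V) {a b : V} (h : G.Adj a b) (c : V) :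
    xA G h * lA G hconn hcard c = 0 := by
  by_cases hc : c = a
  · subst hc
    have hl : lA G hconn hcard c = xA G h.symm * xA G h := (L_eq G hconn hcard h).symm
    rw [hl, ← mul_assoc]
    exact three G hconn hcard h
  · have h1 : xA G h = xA G h * eA G a := by rw [xA_mul_eA, if_pos rfl]
    have h2 : lA G hconn hcard c = eA G c * lA G hconn hcard c := by
      rw [eA_mul_lA, if_pos rfl]
    rw [h1, h2, mul_assoc, ← mul_assoc (eA G a), eA_mul_eA,
      if_neg (fun he => hc he.symm), zero_mul, mul_zero]

lemma lA_mul_xA (hconn : G.Connected) (hcard : 2 < Fintype.card V) {a b : V} (h : G.Adj a b) (c : V) :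
    lA G hconn hcard c * xA G h = 0 := by
  by_cases hc : c = b
  · subst hc
    have hl : lA G hconn hcard c = xA G h * xA G h.symm := (L_eq G hconn hcard h.symm).symm
    rw [hl]
    exact three G hconn hcard h
  · have h1 : xA G h = eA G b * xA G h := by rw [eA_mul_xA, if_pos rfl]
    have h2 : lA G hconn hcard c = lA G hconn hcard c * eA G c := by
      rw [lA_mul_eA, if_pos rfl]
    rw [h1, h2, mul_assoc, ← mul_assoc (eA G c), eA_mul_eA, if_neg hc, zero_mul, mul_zero]

lemma lA_mul_lA (hconn : G.Connected) (hcard : 2 < Fintype.card V) (a c : V) : lA G hconn hcard a * lA G hconn hcard c = 0 := by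
  rw [lA, mul_assoc, xA_mul_lA, mul_zero]

lemma xA_mul_xA (hconn : G.Connected) (hcard : 2 < Fintype.card V) {a b c d : V} (h₁ : G.Adj a b) (h₂ : G.Adj c d) :
    xA G h₁ * xA G h₂ = if d = a ∧ c = b then lA G hconn hcard b else 0 := by
  by_cases hd : d = a
  · subst hd
    by_cases hc : c = b
    · subst hc
      rw [if_pos ⟨rfl, rfl⟩]
      exact L_eq G hconn hcard h₁.symm
    · rw [if_neg (fun hp => hc hp.2)]
      exact compz G h₂ h₁ (Ne.symm hc)
  · rw [if_neg (fun hp => hd hp.1)]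
    have h1 : xA G h₁ = xA G h₁ * eA G a := by rw [xA_mul_eA, if_pos rfl]
    have h2 : xA G h₂ = eA G d * xA G h₂ := by rw [eA_mul_xA, if_pos rfl]
    rw [h1, h2, mul_assoc, ← mul_assoc (eA G a), eA_mul_eA,
      if_neg (fun he => hd he.symm), zero_mul, mul_zero]

/-! ### A concrete representation -/

abbrev Idx (G : SimpleGraph V) [DecidableRel G.Adj] : Type :=
  (V ⊕ {p : V × V // G.Adj p.1 p.2}) ⊕ V

def ei (a : V) : Idx G := Sum.inl (Sum.inl a)
def xi {a b : V} (h : G.Adj a b) : Idx G := Sum.inl (Sum.inr ⟨(a, b), h⟩)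
def li (a : V) : Idx G := Sum.inr a

def tg : Idx G → V := Sum.elim (Sum.elim id (fun p => p.1.2)) id

def Ee (a : V) : Module.End ℂ (Idx G → ℂ) where
  toFun v i := if tg G i = a then v i else 0
  map_add' v w := by funext i; by_cases h : tg G i = a <;> simp [h]
  map_smul' c v := by funext i; by_cases h : tg G i = a <;> simp [h]

def Xe {a b : V} (h : G.Adj a b) : Module.End ℂ (Idx G → ℂ) where
  toFun v i := if i = xi G h then v (ei G a) else if i = li G b then v (xi G h.symm) else 0
  map_add' v w := by
    funext i; simp only [Pi.add_apply]; split_ifs <;> simp_all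
  map_smul' c v := by
    funext i
    simp only [Pi.smul_apply, smul_eq_mul, RingHom.id_apply]
    split_ifs <;> simp_all

@[simp] lemma Ee_apply (a : V) (v : Idx G → ℂ) (i : Idx G) :
    Ee G a v i = if tg G i = a then v i else 0 := rfl

@[simp] lemma Xe_apply {a b : V} (h : G.Adj a b) (v : Idx G → ℂ) (i : Idx G) :
    Xe G h v i = if i = xi G h then v (ei G a) else if i = li G b then v (xi G h.symm) else 0 :=
  rfl

lemma end_idem (a : V) : Ee G a * Ee G a = Ee G a := by
  apply LinearMap.ext; intro v; funext i
  simp only [Module.End.mul_apply, Ee_apply]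
  split_ifs <;> simp_all

lemma end_orth (a b : V) (hab : a ≠ b) : Ee G a * Ee G b = 0 := by
  apply LinearMap.ext; intro v; funext i
  simp only [Module.End.mul_apply, Ee_apply, LinearMap.zero_apply, Pi.zero_apply]
  split_ifs <;> simp_all

lemma end_sum : ∑ a : V, Ee G a = 1 := by
  apply LinearMap.ext; intro v; funext i
  rw [LinearMap.sum_apply, Finset.sum_apply]
  simp [Ee_apply, Finset.sum_ite_eq, Module.End.one_apply]

lemma end_target {a b : V} (h : G.Adj a b) : Ee G b * Xe G h = Xe G h := by
  apply LinearMap.ext; intro v; funext i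
  simp only [Module.End.mul_apply, Ee_apply, Xe_apply]
  split_ifs <;> simp_all [xi, li, tg]

lemma end_source {a b : V} (h : G.Adj a b) : Xe G h * Ee G a = Xe G h := by
  apply LinearMap.ext; intro v; funext i
  simp only [Module.End.mul_apply, Ee_apply, Xe_apply]
  split_ifs <;> simp_all [xi, ei, li, tg]

lemma end_compz {a b c : V} (h₁ : G.Adj a b) (h₂ : G.Adj b c) (hca : c ≠ a) :
    Xe G h₂ * Xe G h₁ = 0 := by
  apply LinearMap.ext; intro v; funext i
  simp only [Module.End.mul_apply, Xe_apply, LinearMap.zero_apply, Pi.zero_apply]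
  split_ifs <;> simp_all [xi, ei, li]

lemma end_zig {a b c : V} (hab : G.Adj a b) (hac : G.Adj a c) :
    Xe G hab.symm * Xe G hab = Xe G hac.symm * Xe G hac := by
  apply LinearMap.ext; intro v; funext i
  simp only [Module.End.mul_apply, Xe_apply]
  split_ifs <;> simp_all [xi, ei, li]

def gen : ZigzagGen G → Module.End ℂ (Idx G → ℂ) :=
  fun g => Sum.elim (fun a => Ee G a) (fun p => Xe G p.2) g

lemma lift_zge (a : V) : FreeAlgebra.lift ℂ (gen G) (zge ℂ G a) = Ee G a := by
  unfold zge; erw [FreeAlgebra.lift_ι_apply]; rfl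

lemma lift_zgx {a b : V} (h : G.Adj a b) : FreeAlgebra.lift ℂ (gen G) (zgx ℂ G h) = Xe G h := by
  unfold zgx; erw [FreeAlgebra.lift_ι_apply]; rfl

lemma relhold : ∀ ⦃x y : FreeAlgebra ℂ (ZigzagGen G)⦄, ZigzagRel ℂ G x y →
    FreeAlgebra.lift ℂ (gen G) x = FreeAlgebra.lift ℂ (gen G) y := by
  intro x y hr
  induction hr with
  | idem a =>
      simp only [map_mul, lift_zge, Sum.elim_inl]
      exact end_idem G a
  | orth a b hab =>
      simp only [map_mul, map_zero, lift_zge, Sum.elim_inl]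
      exact end_orth G a b hab
  | sum_one =>
      simp only [map_sum, map_one, lift_zge, Sum.elim_inl]
      exact end_sum G
  | target_id h =>
      simp only [map_mul, lift_zge, lift_zgx, Sum.elim_inl, Sum.elim_inr]
      exact end_target G h
  | source_id h =>
      simp only [map_mul, lift_zge, lift_zgx, Sum.elim_inl, Sum.elim_inr]
      exact end_source G h
  | comp_zero h₁ h₂ hca =>
      simp only [map_mul, map_zero, lift_zgx, Sum.elim_inr]
      exact end_compz G h₁ h₂ hca
  | zigzag hab hac =>
      simp only [map_mul, lift_zgx, Sum.elim_inr]
      exact end_zig G hab hac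

/-- The representation of the zigzag algebra. -/
def rep : ZigzagAlgebra ℂ G →ₐ[ℂ] Module.End ℂ (Idx G → ℂ) :=
  RingQuot.liftAlgHom ℂ ⟨FreeAlgebra.lift ℂ (gen G), relhold G⟩

lemma rep_eA (a : V) : rep G (eA G a) = Ee G a := by
  rw [rep, eA, mk, RingQuot.liftAlgHom_mkAlgHom_apply]
  exact lift_zge G a

lemma rep_xA {a b : V} (h : G.Adj a b) : rep G (xA G h) = Xe G h := by
  rw [rep, xA, mk, RingQuot.liftAlgHom_mkAlgHom_apply]
  exact lift_zgx G h

/-- The trace functional on endomorphisms. -/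
def lam : Module.End ℂ (Idx G → ℂ) →ₗ[ℂ] ℂ where
  toFun M := ∑ a : V, M (Pi.single (ei G a) 1) (li G a)
  map_add' M N := by simp [Finset.sum_add_distrib]
  map_smul' c M := by simp [Finset.mul_sum]

/-- The trace on the zigzag algebra. -/
def trA : ZigzagAlgebra ℂ G →ₗ[ℂ] ℂ := lam G ∘ₗ (rep G).toLinearMap

lemma trA_eA (a : V) : trA G (eA G a) = 0 := by
  simp only [trA, LinearMap.comp_apply, AlgHom.toLinearMap_apply, rep_eA, lam,
    LinearMap.coe_mk, AddHom.coe_mk, Ee_apply]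
  refine Finset.sum_eq_zero fun c _ => ?_
  simp [li, ei, tg, Pi.single_apply]

lemma trA_xA {a b : V} (h : G.Adj a b) : trA G (xA G h) = 0 := by
  simp only [trA, LinearMap.comp_apply, AlgHom.toLinearMap_apply, rep_xA, lam,
    LinearMap.coe_mk, AddHom.coe_mk, Xe_apply]
  refine Finset.sum_eq_zero fun c _ => ?_
  simp only [li, xi, ei]
  split_ifs <;> simp_all [Pi.single_apply, li, xi, ei]

lemma trA_lA (hconn : G.Connected) (hcard : 2 < Fintype.card V) (a : V) :
    trA G (lA G hconn hcard a) = 1 := by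
  simp only [trA, lA, LinearMap.comp_apply, AlgHom.toLinearMap_apply, map_mul, rep_xA]
  simp only [lam, LinearMap.coe_mk, AddHom.coe_mk, Module.End.mul_apply, Xe_apply]
  rw [Finset.sum_eq_single a]
  · split_ifs <;> simp_all [Pi.single_apply, li, xi, ei]
  · intro c _ hca
    split_ifs <;> simp_all [Pi.single_apply, li, xi, ei]
  · simp

/-! ### Spanning family -/

/-- The spanning family of the zigzag algebra. -/
def bas (hconn : G.Connected) (hcard : 2 < Fintype.card V) : Idx G → ZigzagAlgebra ℂ G :=
  fun i => Sum.elim (Sum.elim (fun a => eA G a) (fun p => xA G p.2))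
    (fun a => lA G hconn hcard a) i

lemma bas_mul_bas (hconn : G.Connected) (hcard : 2 < Fintype.card V) (i j : Idx G) :
    bas G hconn hcard i * bas G hconn hcard j ∈
      Submodule.span ℂ (Set.range (bas G hconn hcard)) := by
  have hmem : ∀ k : Idx G, bas G hconn hcard k ∈
      Submodule.span ℂ (Set.range (bas G hconn hcard)) :=
    fun k => Submodule.subset_span ⟨k, rfl⟩
  rcases i with (a | ⟨⟨a, b⟩, hab⟩) | a <;> rcases j with (c | ⟨⟨c, d⟩, hcd⟩) | c <;>
    simp only [bas, Sum.elim_inl, Sum.elim_inr]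
  · rw [eA_mul_eA]; split_ifs
    · exact hmem (ei G a)
    · exact Submodule.zero_mem _
  · rw [eA_mul_xA]; split_ifs
    · exact hmem (Sum.inl (Sum.inr ⟨(c, d), hcd⟩))
    · exact Submodule.zero_mem _
  · rw [eA_mul_lA]; split_ifs
    · exact hmem (li G c)
    · exact Submodule.zero_mem _
  · rw [xA_mul_eA]; split_ifs
    · exact hmem (Sum.inl (Sum.inr ⟨(a, b), hab⟩))
    · exact Submodule.zero_mem _
  · rw [xA_mul_xA G hconn hcard]; split_ifs
    · exact hmem (li G b)
    · exact Submodule.zero_mem _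
  · rw [xA_mul_lA]; exact Submodule.zero_mem _
  · rw [lA_mul_eA]; split_ifs
    · exact hmem (li G a)
    · exact Submodule.zero_mem _
  · rw [lA_mul_xA]; exact Submodule.zero_mem _
  · rw [lA_mul_lA]; exact Submodule.zero_mem _

lemma span_mul_closed (hconn : G.Connected) (hcard : 2 < Fintype.card V)
    {u w : ZigzagAlgebra ℂ G}
    (hu : u ∈ Submodule.span ℂ (Set.range (bas G hconn hcard)))
    (hw : w ∈ Submodule.span ℂ (Set.range (bas G hconn hcard))) :
    u * w ∈ Submodule.span ℂ (Set.range (bas G hconn hcard)) := by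
  induction hu, hw using Submodule.span_induction₂ with
  | mem_mem x y hx hy =>
      obtain ⟨i, rfl⟩ := hx
      obtain ⟨j, rfl⟩ := hy
      exact bas_mul_bas G hconn hcard i j
  | zero_left y hy => rw [zero_mul]; exact Submodule.zero_mem _
  | zero_right x hx => rw [mul_zero]; exact Submodule.zero_mem _
  | add_left x y z hx hy hz h1 h2 => rw [add_mul]; exact Submodule.add_mem _ h1 h2
  | add_right x y z hx hy hz h1 h2 => rw [mul_add]; exact Submodule.add_mem _ h1 h2
  | smul_left r x y hx hy h1 => rw [smul_mul_assoc]; exact Submodule.smul_mem _ _ h1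
  | smul_right r x y hx hy h1 => rw [mul_smul_comm]; exact Submodule.smul_mem _ _ h1

lemma span_top (hconn : G.Connected) (hcard : 2 < Fintype.card V)
    (u : ZigzagAlgebra ℂ G) :
    u ∈ Submodule.span ℂ (Set.range (bas G hconn hcard)) := by
  obtain ⟨x, rfl⟩ := RingQuot.mkAlgHom_surjective ℂ (ZigzagRel ℂ G) u
  induction x using FreeAlgebra.induction with
  | grade0 r =>
      have h1 : (RingQuot.mkAlgHom ℂ (ZigzagRel ℂ G)) (algebraMap ℂ _ r) =
          r • (1 : ZigzagAlgebra ℂ G) := by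
        rw [AlgHom.commutes]; exact Algebra.algebraMap_eq_smul_one r
      rw [h1, ← sum_eA G]
      exact Submodule.smul_mem _ _
        (Submodule.sum_mem _ fun a _ => Submodule.subset_span ⟨ei G a, rfl⟩)
  | grade1 g =>
      rcases g with a | p
      · exact Submodule.subset_span ⟨ei G a, rfl⟩
      · exact Submodule.subset_span ⟨Sum.inl (Sum.inr p), rfl⟩
  | mul x y hx hy =>
      rw [map_mul]; exact span_mul_closed G hconn hcard hx hy
  | add x y hx hy =>
      rw [map_add]; exact Submodule.add_mem _ hx hy

/-! ### The dual pairing on the spanning family -/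

def dualIdx : Idx G → Idx G :=
  fun i => Sum.elim (Sum.elim (fun a => li G a) (fun p => xi G p.2.symm))
    (fun a => ei G a) i

lemma dual_dual (i : Idx G) : dualIdx G (dualIdx G i) = i := by
  rcases i with (a | ⟨⟨a, b⟩, h⟩) | a <;> rfl

lemma Tsymm (i j : Idx G) :
    (if i = dualIdx G j then (1 : ℂ) else 0) = (if j = dualIdx G i then 1 else 0) := by
  by_cases h : i = dualIdx G j
  · rw [if_pos h, if_pos (by rw [h, dual_dual])]
  · rw [if_neg h, if_neg (fun hj => h (by rw [hj, dual_dual]))]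

lemma trA_bas_mul (hconn : G.Connected) (hcard : 2 < Fintype.card V) (i j : Idx G) :
    trA G (bas G hconn hcard i * bas G hconn hcard j) =
      if i = dualIdx G j then 1 else 0 := by
  rcases i with (a | ⟨⟨a, b⟩, hab⟩) | a <;> rcases j with (c | ⟨⟨c, d⟩, hcd⟩) | c <;>
    simp only [bas, Sum.elim_inl, Sum.elim_inr, dualIdx]
  · rw [eA_mul_eA]; split_ifs <;> simp_all [trA_eA, ei, xi, li]
  · rw [eA_mul_xA]; split_ifs <;> simp_all [trA_xA, ei, xi, li]
  · rw [eA_mul_lA]; split_ifs <;> simp_all [trA_lA, ei, xi, li]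
  · rw [xA_mul_eA]; split_ifs <;> simp_all [trA_xA, ei, xi, li]
  · rw [xA_mul_xA G hconn hcard]; split_ifs <;> simp_all [trA_lA, ei, xi, li]
  · rw [xA_mul_lA]; simp [map_zero, ei, xi, li]
  · rw [lA_mul_eA]; split_ifs <;> simp_all [trA_lA, ei, xi, li]
  · rw [lA_mul_xA]; simp [map_zero, ei, xi, li]
  · rw [lA_mul_lA]; simp [map_zero, ei, xi, li]

lemma trA_sum_mul_bas (hconn : G.Connected) (hcard : 2 < Fintype.card V)
    (c : Idx G → ℂ) (j : Idx G) :
    trA G ((∑ i, c i • bas G hconn hcard i) * bas G hconn hcard j) = c (dualIdx G j) := by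
  rw [Finset.sum_mul, map_sum]
  have : ∀ i : Idx G, trA G ((c i • bas G hconn hcard i) * bas G hconn hcard j) =
      c i * (if i = dualIdx G j then 1 else 0) := by
    intro i
    rw [smul_mul_assoc, map_smul, trA_bas_mul G hconn hcard, smul_eq_mul]
  simp only [this, mul_ite, mul_one, mul_zero]
  rw [Finset.sum_ite_eq' Finset.univ (dualIdx G j) c]
  simp

lemma trA_symm (hconn : G.Connected) (hcard : 2 < Fintype.card V)
    (x y : ZigzagAlgebra ℂ G) : trA G (x * y) = trA G (y * x) := by
  obtain ⟨c, hc⟩ := (Submodule.mem_span_range_iff_exists_fun ℂ).mp (span_top G hconn hcard x)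
  obtain ⟨d, hd⟩ := (Submodule.mem_span_range_iff_exists_fun ℂ).mp (span_top G hconn hcard y)
  have key : ∀ c d : Idx G → ℂ,
      trA G ((∑ i, c i • bas G hconn hcard i) * (∑ j, d j • bas G hconn hcard j)) =
        ∑ i, ∑ j, c i * d j * (if i = dualIdx G j then 1 else 0) := by
    intro c d
    rw [Finset.sum_mul, map_sum]
    refine Finset.sum_congr rfl fun i _ => ?_
    rw [Finset.mul_sum, map_sum]
    refine Finset.sum_congr rfl fun j _ => ?_
    rw [smul_mul_assoc, mul_smul_comm, map_smul, map_smul, trA_bas_mul G hconn hcard,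
      smul_eq_mul, smul_eq_mul, ← mul_assoc]
  rw [← hc, ← hd, key, key, Finset.sum_comm]
  refine Finset.sum_congr rfl fun j _ => Finset.sum_congr rfl fun i _ => ?_
  rw [Tsymm]
  ring

lemma trA_nondeg (hconn : G.Connected) (hcard : 2 < Fintype.card V)
    (x : ZigzagAlgebra ℂ G) (hx : ∀ y : ZigzagAlgebra ℂ G, trA G (x * y) = 0) : x = 0 := by
  obtain ⟨c, hc⟩ := (Submodule.mem_span_range_iff_exists_fun ℂ).mp (span_top G hconn hcard x)
  have hz : ∀ j : Idx G, c (dualIdx G j) = 0 := by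
    intro j
    have := hx (bas G hconn hcard j)
    rw [← hc, trA_sum_mul_bas G hconn hcard] at this
    exact this
  have hz' : ∀ i : Idx G, c i = 0 := by
    intro i
    have := hz (dualIdx G i)
    rwa [dual_dual] at this
  rw [← hc]
  exact Finset.sum_eq_zero fun i _ => by rw [hz' i, zero_smul]

end ZZaux

/-- the zigzag algebra `A(Γ)` is a symmetric algebra: it carries a
`ℂ`-linear trace `tr : A(Γ) → ℂ` with `tr(xy) = tr(yx)` whose associated bilinear form
`(x, y) ↦ tr(xy)` is nondegenerate. -/
theorem zigzagAlgebra_symmetric {V : Type} [Fintype V] [DecidableEq V]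
    (G : SimpleGraph V) [DecidableRel G.Adj]
    (hconn : G.Connected) (hcard : 2 < Fintype.card V) :
    ∃ tr : ZigzagAlgebra ℂ G →ₗ[ℂ] ℂ,
      (∀ x y : ZigzagAlgebra ℂ G, tr (x * y) = tr (y * x)) ∧
      (∀ x : ZigzagAlgebra ℂ G, (∀ y : ZigzagAlgebra ℂ G, tr (x * y) = 0) → x = 0) := by
  exact ⟨ZZaux.trA G, fun x y => ZZaux.trA_symm G hconn hcard x y,
    fun x hx => ZZaux.trA_nondeg G hconn hcard x hx⟩

end
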